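/- Let α ∈ (0,1] and v, δ > 0, and set Δ = {αδ, √δ, (αδ²)^{1/3}}. Consider the system of equations in the unknowns (ℓ₁, ℓⱼ) ∈ (0,1)²: (1 − ℓⱼ)/(1 − ℓ₁) = v²/δ and ℓⱼ(1 − ℓⱼ) = α v ℓ₁(1 − ℓ₁). Then the system has a solution if and only if either (v² = δ and αv = 1) or (0 < v < min Δ or v > max Δ). In the first case, the solutions are exactly the pairs with ℓⱼ = ℓ₁ ∈ (0,1). In the second case (where αδ² ≠ v³), the solution is unique and given by ℓ₁ = v(δ − v²)/(αδ² − v³) and ℓⱼ = αδ(δ − v²)/(αδ² − v³), and these two values are distinct. -/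

import Mathlib

open Set

private lemma aux18 {α v δ l1 lj : ℝ} (hv : 0 < v) (hδ : 0 < δ)
    (h1b : l1 < 1) (h3 : (1 - lj) / (1 - l1) = v ^ 2 / δ)
    (h4 : lj * (1 - lj) = α * v * (l1 * (1 - l1))) :
    lj * v = α * δ * l1 ∧ l1 * (α * δ ^ 2 - v ^ 3) = v * (δ - v ^ 2) := by
  have h1ne : (1 : ℝ) - l1 ≠ 0 := ne_of_gt (by linarith)
  have e3 : (1 - lj) * δ = v ^ 2 * (1 - l1) := (div_eq_div_iff h1ne hδ.ne').1 h3
  have key0 : (1 - l1) * (v * (lj * v - α * δ * l1)) = 0 := by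
    linear_combination δ * h4 - lj * e3
  have e5 : lj * v = α * δ * l1 := by
    rcases mul_eq_zero.1 key0 with h | h
    · exact absurd h h1ne
    · rcases mul_eq_zero.1 h with h' | h'
      · exact absurd h' hv.ne'
      · linarith
  refine ⟨e5, ?_⟩
  linear_combination (-v) * e3 - δ * e5

private lemma sol18 {α v δ : ℝ} (hα0 : 0 < α) (hv : 0 < v) (hδ : 0 < δ)
    (h : (v < α*δ ∧ v^2 < δ ∧ v^3 < α*δ^2) ∨ (α*δ < v ∧ δ < v^2 ∧ α*δ^2 < v^3)) :
    v*(δ-v^2)/(α*δ^2-v^3) ∈ Ioo (0:ℝ) 1 ∧ α*δ*(δ-v^2)/(α*δ^2-v^3) ∈ Ioo (0:ℝ) 1 ∧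
    (1 - α*δ*(δ-v^2)/(α*δ^2-v^3)) / (1 - v*(δ-v^2)/(α*δ^2-v^3)) = v^2/δ ∧
    (α*δ*(δ-v^2)/(α*δ^2-v^3)) * (1 - α*δ*(δ-v^2)/(α*δ^2-v^3))
      = α*v*((v*(δ-v^2)/(α*δ^2-v^3)) * (1 - v*(δ-v^2)/(α*δ^2-v^3))) := by
  have hDne : α*δ^2 - v^3 ≠ 0 := by
    rcases h with ⟨_, _, h3⟩ | ⟨_, _, h3⟩
    · exact ne_of_gt (by linarith)
    · exact ne_of_lt (by linarith)
  have hne2 : α*δ - v ≠ 0 := by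
    rcases h with ⟨ha, _, _⟩ | ⟨ha, _, _⟩
    · exact ne_of_gt (by linarith)
    · exact ne_of_lt (by linarith)
  have q1 : 1 - v*(δ-v^2)/(α*δ^2-v^3) = δ*(α*δ-v)/(α*δ^2-v^3) := by
    rw [eq_div_iff hDne, sub_mul, div_mul_cancel₀ _ hDne]
    ring
  have q2 : 1 - α*δ*(δ-v^2)/(α*δ^2-v^3) = v^2*(α*δ-v)/(α*δ^2-v^3) := by
    field_simp
    ring
  have hE1 : (1 - α*δ*(δ-v^2)/(α*δ^2-v^3)) / (1 - v*(δ-v^2)/(α*δ^2-v^3)) = v^2/δ := by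
    rw [q1, q2]
    field_simp
  have hE2 : (α*δ*(δ-v^2)/(α*δ^2-v^3)) * (1 - α*δ*(δ-v^2)/(α*δ^2-v^3))
      = α*v*((v*(δ-v^2)/(α*δ^2-v^3)) * (1 - v*(δ-v^2)/(α*δ^2-v^3))) := by
    rw [q1, q2]
    field_simp
  refine ⟨⟨?_, ?_⟩, ⟨?_, ?_⟩, hE1, hE2⟩
  · rcases h with ⟨ha, hb, hc⟩ | ⟨ha, hb, hc⟩
    · exact div_pos (by nlinarith [mul_pos hv (sub_pos.2 hb)]) (by linarith)
    · exact div_pos_of_neg_of_neg (by nlinarith [mul_pos hv (sub_pos.2 hb)]) (by linarith)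
  · have hpos : 0 < δ*(α*δ-v)/(α*δ^2-v^3) := by
      rcases h with ⟨ha, hb, hc⟩ | ⟨ha, hb, hc⟩
      · exact div_pos (by nlinarith [mul_pos hδ (sub_pos.2 ha)]) (by linarith)
      · exact div_pos_of_neg_of_neg (by nlinarith [mul_pos hδ (sub_pos.2 ha)]) (by linarith)
    linarith [q1]
  · rcases h with ⟨ha, hb, hc⟩ | ⟨ha, hb, hc⟩
    · exact div_pos (by nlinarith [mul_pos (mul_pos hα0 hδ) (sub_pos.2 hb)]) (by linarith)
    · exact div_pos_of_neg_of_neg (by nlinarith [mul_pos (mul_pos hα0 hδ) (sub_pos.2 hb)]) (by linarith)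
  · have hpos : 0 < v^2*(α*δ-v)/(α*δ^2-v^3) := by
      rcases h with ⟨ha, hb, hc⟩ | ⟨ha, hb, hc⟩
      · exact div_pos (by nlinarith [mul_pos (pow_pos hv 2) (sub_pos.2 ha)]) (by linarith)
      · exact div_pos_of_neg_of_neg (by nlinarith [mul_pos (pow_pos hv 2) (sub_pos.2 ha)]) (by linarith)
    linarith [q2]

/-- End states of degenerate non-stationary traveling waves for quadratic flux and linear
diffusivity: solvability of the algebraic system, and the explicit (unique) solution when
`αδ² ≠ v³`. -/
theorem stmt18 (α v δ : ℝ) (hα : α ∈ Ioc (0:ℝ) 1) (hv : 0 < v) (hδ : 0 < δ)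
    (P : ℝ → ℝ → Prop)
    (hP : ∀ l1 lj : ℝ, P l1 lj ↔
      (l1 ∈ Ioo (0:ℝ) 1 ∧ lj ∈ Ioo (0:ℝ) 1 ∧
        (1 - lj) / (1 - l1) = v ^ 2 / δ ∧
        lj * (1 - lj) = α * v * (l1 * (1 - l1)))) :
    ((∃ l1 lj : ℝ, P l1 lj) ↔
      ((v ^ 2 = δ ∧ α * v = 1) ∨
        (v < min (α * δ) (min (Real.sqrt δ) ((α * δ ^ 2) ^ ((1:ℝ)/3))) ∨
          max (α * δ) (max (Real.sqrt δ) ((α * δ ^ 2) ^ ((1:ℝ)/3))) < v))) ∧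
    ((v ^ 2 = δ ∧ α * v = 1) →
      ∀ l1 lj : ℝ, P l1 lj ↔ (l1 ∈ Ioo (0:ℝ) 1 ∧ lj = l1)) ∧
    ((v < min (α * δ) (min (Real.sqrt δ) ((α * δ ^ 2) ^ ((1:ℝ)/3))) ∨
        max (α * δ) (max (Real.sqrt δ) ((α * δ ^ 2) ^ ((1:ℝ)/3))) < v) →
      α * δ ^ 2 ≠ v ^ 3 ∧
      (∀ l1 lj : ℝ, P l1 lj ↔
        (l1 = v * (δ - v ^ 2) / (α * δ ^ 2 - v ^ 3) ∧
          lj = α * δ * (δ - v ^ 2) / (α * δ ^ 2 - v ^ 3))) ∧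
      v * (δ - v ^ 2) / (α * δ ^ 2 - v ^ 3)
        ≠ α * δ * (δ - v ^ 2) / (α * δ ^ 2 - v ^ 3)) := by
  obtain ⟨hα0, hα1⟩ := hα
  have hADpos : (0:ℝ) < α * δ ^ 2 := by positivity
  have hC3 : ((α * δ ^ 2) ^ ((1:ℝ)/3)) ^ (3:ℕ) = α * δ ^ 2 := by
    rw [show (1:ℝ)/3 = ((3:ℕ):ℝ)⁻¹ by norm_num]
    exact Real.rpow_inv_natCast_pow hADpos.le (by norm_num)
  have hCpos : 0 < (α * δ ^ 2) ^ ((1:ℝ)/3) := Real.rpow_pos_of_pos hADpos _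
  have hvC : v < (α * δ ^ 2) ^ ((1:ℝ)/3) ↔ v ^ 3 < α * δ ^ 2 := by
    conv_rhs => rw [← hC3]
    exact (pow_lt_pow_iff_left₀ hv.le hCpos.le (n := 3) (by norm_num)).symm
  have hCv : (α * δ ^ 2) ^ ((1:ℝ)/3) < v ↔ α * δ ^ 2 < v ^ 3 := by
    conv_rhs => rw [← hC3]
    exact (pow_lt_pow_iff_left₀ hCpos.le hv.le (n := 3) (by norm_num)).symm
  have hvS : v < Real.sqrt δ ↔ v ^ 2 < δ := Real.lt_sqrt hv.le
  have hSv : Real.sqrt δ < v ↔ δ < v ^ 2 := Real.sqrt_lt' hv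
  have key : (v < min (α * δ) (min (Real.sqrt δ) ((α * δ ^ 2) ^ ((1:ℝ)/3))) ∨
      max (α * δ) (max (Real.sqrt δ) ((α * δ ^ 2) ^ ((1:ℝ)/3))) < v) ↔
      ((v < α*δ ∧ v^2 < δ ∧ v^3 < α*δ^2) ∨ (α*δ < v ∧ δ < v^2 ∧ α*δ^2 < v^3)) := by
    rw [lt_min_iff, lt_min_iff, max_lt_iff, max_lt_iff, hvS, hvC, hSv, hCv]
  refine ⟨?_, ?_, ?_⟩
  · -- existence iff
    constructor
    · rintro ⟨l1, lj, hp⟩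
      rw [hP] at hp
      obtain ⟨⟨h1a, h1b⟩, ⟨h2a, h2b⟩, h3, h4⟩ := hp
      obtain ⟨e5, e6⟩ := aux18 hv hδ h1b h3 h4
      by_cases hD : α * δ ^ 2 - v ^ 3 = 0
      · left
        have hδv : δ = v ^ 2 := by nlinarith [e6]
        refine ⟨hδv.symm, ?_⟩
        have h0 : v ^ 3 * (α * v - 1) = 0 := by
          linear_combination hD - α * (v ^ 2 + δ) * hδv
        rcases mul_eq_zero.1 h0 with h' | h'
        · exact absurd h' (pow_ne_zero _ hv.ne')
        · linarith
      · right
        rw [key]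
        rcases lt_or_gt_of_ne hD with hDn | hDp
        · right
          have t1 : (1 - l1) * (α * δ ^ 2 - v ^ 3) < 0 :=
            mul_neg_of_pos_of_neg (by linarith) hDn
          have t2 : l1 * (α * δ ^ 2 - v ^ 3) < 0 :=
            mul_neg_of_pos_of_neg h1a hDn
          refine ⟨by nlinarith [t1, e6], by nlinarith [t2, e6], by linarith⟩
        · left
          have t1 : 0 < (1 - l1) * (α * δ ^ 2 - v ^ 3) :=
            mul_pos (by linarith) hDp
          have t2 : 0 < l1 * (α * δ ^ 2 - v ^ 3) :=
            mul_pos h1a hDp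
          refine ⟨by nlinarith [t1, e6], by nlinarith [t2, e6], by linarith⟩
    · rintro (⟨hd, ha1⟩ | hcond)
      · refine ⟨1/2, 1/2, (hP _ _).2 ⟨⟨by norm_num, by norm_num⟩, ⟨by norm_num, by norm_num⟩, ?_, ?_⟩⟩
        · rw [← hd, div_self (pow_ne_zero _ hv.ne')]
          norm_num
        · rw [ha1, one_mul]
      · rw [key] at hcond
        obtain ⟨m1, m2, e1, e2⟩ := sol18 hα0 hv hδ hcond
        exact ⟨_, _, (hP _ _).2 ⟨m1, m2, e1, e2⟩⟩
  · -- degenerate case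
    rintro ⟨hd, ha1⟩ l1 lj
    rw [hP]
    have hαδ : α * δ = v := by linear_combination (-α) * hd + v * ha1
    constructor
    · rintro ⟨h1, h2, h3, h4⟩
      obtain ⟨e5, e6⟩ := aux18 hv hδ h1.2 h3 h4
      refine ⟨h1, ?_⟩
      have h' : lj * v = l1 * v := by linear_combination e5 + l1 * hαδ
      exact mul_right_cancel₀ hv.ne' h'
    · rintro ⟨h1, rfl⟩
      refine ⟨h1, h1, ?_, ?_⟩
      · rw [div_self (sub_ne_zero.2 h1.2.ne'), ← hd,
          div_self (pow_ne_zero _ hv.ne')]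
      · rw [ha1, one_mul]
  · -- generic case
    intro hcond
    rw [key] at hcond
    have hDne : α * δ ^ 2 - v ^ 3 ≠ 0 := by
      rcases hcond with ⟨_, _, h3⟩ | ⟨_, _, h3⟩
      · exact ne_of_gt (by linarith)
      · exact ne_of_lt (by linarith)
    refine ⟨sub_ne_zero.1 hDne, ?_, ?_⟩
    · intro l1 lj
      rw [hP]
      constructor
      · rintro ⟨h1, h2, h3, h4⟩
        obtain ⟨e5, e6⟩ := aux18 hv hδ h1.2 h3 h4
        have e7 : lj * (α * δ ^ 2 - v ^ 3) = α * δ * (δ - v ^ 2) := by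
          apply mul_left_cancel₀ hv.ne'
          linear_combination (α * δ ^ 2 - v ^ 3) * e5 + α * δ * e6
        exact ⟨(eq_div_iff hDne).2 e6, (eq_div_iff hDne).2 e7⟩
      · rintro ⟨rfl, rfl⟩
        obtain ⟨m1, m2, e1, e2⟩ := sol18 hα0 hv hδ hcond
        exact ⟨m1, m2, e1, e2⟩
    · intro heq
      rw [div_eq_div_iff hDne hDne] at heq
      have h' : v * (δ - v ^ 2) = α * δ * (δ - v ^ 2) := mul_right_cancel₀ hDne heq
      rcases hcond with ⟨ha, hb, _⟩ | ⟨ha, hb, _⟩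
      · nlinarith [mul_pos (sub_pos.2 ha) (sub_pos.2 hb), h']
      · nlinarith [mul_pos (sub_pos.2 ha) (sub_pos.2 hb), h']
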